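/- Define a family of real numbers τ^{k̄}(P) indexed by multi-indices k̄ ∈ ℕ^n and words P in m letters by the recursion: τ^{k̄}(1) = 1 if k̄ = 0 and 0 otherwise, and τ^{k̄}(X_i P) = Σ_{0 ≤ p̄ ≤ k̄} Π_j binom(k_j, p_j) Σ_{P = P₁ X_i P₂} τ^{p̄}(P₁) τ^{k̄-p̄}(P₂) + Σ_{j: k_j ≥ 1} k_j τ^{k̄ - 1_j}((𝒟_i q_j + 𝒟_i q_j^*) P), where q_1,...,q_n are fixed monomials of degree at most D and 𝒟_i is the cyclic derivative. Then there exist constants A, B (depending only on n and D, e.g. B = 2^{n+1}, A = 4nB^{D-2}4^{D-2}) such that for all k̄ and all words P, |τ^{k̄}(P)| / k̄! ≤ A^{Σ k_i} B^{deg P} (Π_i C_{k_i}) C_{deg P}, where C_j are the Catalan numbers and k̄! = Π k_i!. -/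

import Mathlib

set_option maxHeartbeats 1600000

open Finset

/-- The positions at which the letter `i` occurs in the word `P`,
corresponding to the decompositions `P = P₁ X_i P₂`. -/
def occurrences {m : ℕ} (i : Fin m) (P : List (Fin m)) : Finset (Fin P.length) :=
  Finset.univ.filter (fun k => P.get k = i)

/-- The multi-index with a single `1` in position `j`. -/
def unitIdx {n : ℕ} (j : Fin n) : Fin n → ℕ := fun j' => if j' = j then 1 else 0

/-- For a word `q` and a position `k` (an occurrence of the letter `i`, so
`q = q₁ X_i q₂` with `q₁ = q.take k`, `q₂ = q.drop (k+1)`), the corresponding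
term `q₂ q₁ P` of the cyclic derivative `𝒟_i q` multiplied by `P`. -/
def cycTerm {m : ℕ} (q : List (Fin m)) (k : ℕ) (P : List (Fin m)) : List (Fin m) :=
  q.drop (k + 1) ++ q.take k ++ P

lemma catalan_rec_id (k : ℕ) : (k+2) * catalan (k+1) = (4*k+2) * catalan k := by
  have h1 := Nat.succ_mul_centralBinom_succ k
  have h2 := succ_mul_catalan_eq_centralBinom k
  have h3 := succ_mul_catalan_eq_centralBinom (k+1)
  apply Nat.eq_of_mul_eq_mul_left k.succ_pos
  calc (k+1) * ((k+2) * catalan (k+1)) = (k+1+1) * catalan (k+1) * (k+1) := by ring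
  _ = (k+1) * Nat.centralBinom (k+1) := by rw [h3]; ring
  _ = 2 * (2*k+1) * Nat.centralBinom k := h1
  _ = 2 * (2*k+1) * ((k+1) * catalan k) := by rw [h2]
  _ = (k+1) * ((4*k+2) * catalan k) := by ring

lemma catalan_le_succ (k : ℕ) : catalan k ≤ catalan (k+1) := by
  have h := catalan_rec_id k
  have : (k+2) * catalan k ≤ (k+2) * catalan (k+1) := by
    rw [h]; exact Nat.mul_le_mul_right _ (by omega)
  exact Nat.le_of_mul_le_mul_left this (by omega)

lemma catalan_mono : Monotone catalan := monotone_nat_of_le_succ catalan_le_succ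

lemma one_le_catalan (k : ℕ) : 1 ≤ catalan k := by
  simpa using catalan_mono (Nat.zero_le k)

lemma catalan_succ_le_four (k : ℕ) : catalan (k+1) ≤ 4 * catalan k := by
  have h := catalan_rec_id k
  have : (k+2) * catalan (k+1) ≤ (k+2) * (4 * catalan k) := by
    rw [h]; nlinarith [one_le_catalan k]
  exact Nat.le_of_mul_le_mul_left this (by omega)

lemma catalan_add_le (a b : ℕ) : catalan (a + b) ≤ 4 ^ a * catalan b := by
  induction a with
  | zero => simp
  | succ a ih =>
    calc catalan (a + 1 + b) = catalan ((a + b) + 1) := by ring_nf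
    _ ≤ 4 * catalan (a + b) := catalan_succ_le_four _
    _ ≤ 4 * (4 ^ a * catalan b) := Nat.mul_le_mul_left _ ih
    _ = 4 ^ (a+1) * catalan b := by ring

lemma catalan_vandermonde {n : ℕ} (kk : Fin n → ℕ) :
    ∑ pp ∈ Iic kk, ∏ j, (catalan (pp j) * catalan (kk j - pp j)) = ∏ j, catalan (kk j + 1) := by
  have h : (Finset.Iic kk) = Fintype.piFinset (fun j => Finset.Iic (kk j)) := by
    ext x; simp [Fintype.mem_piFinset, Pi.le_def]
  rw [h]
  calc ∑ pp ∈ Fintype.piFinset (fun j => Finset.Iic (kk j)),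
        ∏ j, (catalan (pp j) * catalan (kk j - pp j))
      = ∏ j, ∑ p ∈ Iic (kk j), catalan p * catalan (kk j - p) :=
        (Finset.prod_univ_sum _ (fun j p => catalan p * catalan (kk j - p))).symm
  _ = ∏ j, catalan (kk j + 1) := by
      refine Finset.prod_congr rfl fun j _ => ?_
      have hh : Iic (kk j) = range (kk j + 1) := by ext x; simp [Nat.lt_succ_iff]
      rw [catalan_succ, hh, Finset.sum_range]

lemma occ_catalan_sum_le {m : ℕ} (i : Fin m) (a : Fin m) (P' : List (Fin m)) :
    ∑ k ∈ occurrences i (a :: P'), catalan (k : ℕ) * catalan (P'.length - (k:ℕ))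
      ≤ catalan (P'.length + 1) := by
  calc ∑ k ∈ occurrences i (a :: P'), catalan (k : ℕ) * catalan (P'.length - (k:ℕ))
      ≤ ∑ k : Fin (P'.length + 1), catalan (k : ℕ) * catalan (P'.length - (k:ℕ)) :=
        Finset.sum_le_sum_of_subset (Finset.subset_univ _)
  _ = catalan (P'.length + 1) := (catalan_succ _).symm

lemma sum_unitIdx {n : ℕ} (j : Fin n) : ∑ x, unitIdx j x = 1 := by
  simp [unitIdx, Finset.sum_ite_eq']

lemma sum_sub_unitIdx {n : ℕ} (kk : Fin n → ℕ) (j : Fin n) (h : 1 ≤ kk j) :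
    (∑ x, (kk - unitIdx j) x) + 1 = ∑ x, kk x := by
  have h1 : ∀ x, (kk - unitIdx j) x + unitIdx j x = kk x := by
    intro x
    simp only [Pi.sub_apply, unitIdx]
    split_ifs with hx
    · subst hx; omega
    · omega
  calc (∑ x, (kk - unitIdx j) x) + 1 = (∑ x, (kk - unitIdx j) x) + ∑ x, unitIdx j x := by
        rw [sum_unitIdx]
  _ = ∑ x, ((kk - unitIdx j) x + unitIdx j x) := Finset.sum_add_distrib.symm
  _ = ∑ x, kk x := by simp only [h1]

lemma fact_prod_unitIdx {n : ℕ} (kk : Fin n → ℕ) (j : Fin n) (h : 1 ≤ kk j) :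
    (kk j : ℝ) * ∏ x, (((kk - unitIdx j) x).factorial : ℝ) = ∏ x, ((kk x).factorial : ℝ) := by
  rw [← Finset.prod_erase_mul univ _ (Finset.mem_univ j),
    ← Finset.prod_erase_mul univ (fun x => ((kk x).factorial : ℝ)) (Finset.mem_univ j)]
  have h1 : ∀ x ∈ univ.erase j, (((kk - unitIdx j) x).factorial : ℝ) = ((kk x).factorial : ℝ) := by
    intro x hx
    have hxj := (Finset.mem_erase.mp hx).1
    simp [unitIdx, hxj]
  rw [Finset.prod_congr rfl h1, mul_left_comm]
  congr 1
  have h2 : (kk - unitIdx j) j = kk j - 1 := by simp [unitIdx]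
  rw [h2]
  exact_mod_cast Nat.mul_factorial_pred (by omega : kk j ≠ 0)

lemma sum_split {n : ℕ} (pp kk : Fin n → ℕ) (h : pp ≤ kk) :
    (∑ x, pp x) + (∑ x, (kk - pp) x) = ∑ x, kk x := by
  rw [← Finset.sum_add_distrib]
  refine Finset.sum_congr rfl fun x _ => ?_
  have hx : pp x ≤ kk x := h x
  simp only [Pi.sub_apply]
  omega

lemma one_le_mul5 {a b c d e : ℝ} (ha : 1 ≤ a) (hb : 1 ≤ b) (hc : 1 ≤ c) (hd : 1 ≤ d)
    (he : 1 ≤ e) : 1 ≤ a * b * c * d * e := by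
  have h1 : (1:ℝ) ≤ a * b := by nlinarith
  have h2 : (1:ℝ) ≤ a * b * c := by nlinarith
  have h3 : (1:ℝ) ≤ a * b * c * d := by nlinarith
  nlinarith

/-- Catalan-type a priori bound on the solution of the Schwinger-Dyson recursion:
if `τ` satisfies `τ^{kk}(1) = 1_{kk=0}` and the recursion
`τ^{kk}(X_i P) = ∑_{pp ≤ kk} ∏ binom(k_j,p_j) ∑_{P=P₁X_iP₂} τ^{pp}(P₁)τ^{kk-pp}(P₂)
  + ∑_{j : k_j ≥ 1} k_j τ^{kk-1_j}((𝒟_i q_j + 𝒟_i q_j^*)P)`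
for fixed monomials `q_1,…,q_n` of degree at most `D`, then there are constants
`A, B ≥ 1` (depending only on `n` and `D`) with
`|τ^{kk}(P)|/kk! ≤ A^{Σ k_i} B^{deg P} (∏ C_{k_i}) C_{deg P}`. -/
theorem schwinger_dyson_recursion_catalan_bound
    (m n D : ℕ) (q : Fin n → List (Fin m)) (hq : ∀ j, (q j).length ≤ D)
    (τ : (Fin n → ℕ) → List (Fin m) → ℝ)
    (hbase : ∀ kk : Fin n → ℕ, τ kk [] = if kk = 0 then 1 else 0)
    (hrec : ∀ (kk : Fin n → ℕ) (i : Fin m) (P : List (Fin m)),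
      τ kk (i :: P) =
        (∑ pp ∈ Finset.Iic kk,
          (∏ j, ((kk j).choose (pp j) : ℝ)) *
            ∑ k ∈ occurrences i P,
              τ pp (P.take (k : ℕ)) * τ (kk - pp) (P.drop ((k : ℕ) + 1)))
        + ∑ j : Fin n,
            (kk j : ℝ) *
              ((∑ k ∈ occurrences i (q j), τ (kk - unitIdx j) (cycTerm (q j) (k : ℕ) P))
               + ∑ k ∈ occurrences i (q j).reverse,
                   τ (kk - unitIdx j) (cycTerm (q j).reverse (k : ℕ) P))) :
    ∃ A B : ℝ, 1 ≤ A ∧ 1 ≤ B ∧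
      ∀ (kk : Fin n → ℕ) (P : List (Fin m)),
        |τ kk P| / ∏ i, ((kk i).factorial : ℝ) ≤
          A ^ (∑ i, kk i) * B ^ P.length *
            (∏ i, (catalan (kk i) : ℝ)) * (catalan P.length : ℝ) := by
  classical
  set B : ℝ := 2 ^ (n + 1) with hBdef
  set A : ℝ := 1 + 2 * (n : ℝ) * (2 * (D:ℝ) * 4 ^ D * B ^ D) with hAdef
  have hB1 : (1:ℝ) ≤ B := by rw [hBdef]; exact one_le_pow₀ one_le_two
  have hB0 : (0:ℝ) ≤ B := le_trans zero_le_one hB1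
  have hcst0 : (0:ℝ) ≤ 2 * (D:ℝ) * 4 ^ D * B ^ D := by
    apply mul_nonneg (by positivity) (pow_nonneg hB0 D)
  have hA1 : (1:ℝ) ≤ A := by
    rw [hAdef]
    nlinarith [mul_nonneg (by positivity : (0:ℝ) ≤ 2 * (n:ℝ)) hcst0]
  have hA0 : (0:ℝ) ≤ A := le_trans zero_le_one hA1
  have hAge : 2 * (n:ℝ) * (2 * (D:ℝ) * 4 ^ D * B ^ D) ≤ A := by rw [hAdef]; linarith
  have hB2 : 2 * (4:ℝ) ^ n ≤ B ^ 2 := by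
    rw [hBdef, ← pow_mul]
    have h4 : (4:ℝ) ^ n = 2 ^ (2 * n) := by
      rw [show (4:ℝ) = 2 ^ 2 by norm_num, ← pow_mul]
    rw [h4, show (2:ℝ) * 2 ^ (2*n) = 2 ^ (2*n+1) by ring]
    exact pow_le_pow_right₀ one_le_two (by omega)
  refine ⟨A, B, hA1, hB1, ?_⟩
  set Φ : (Fin n → ℕ) → ℕ → ℝ := fun kk L =>
    (∏ x, ((kk x).factorial : ℝ)) * A ^ (∑ x, kk x) * B ^ L *
      (∏ x, (catalan (kk x) : ℝ)) * (catalan L : ℝ) with hΦ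
  -- basic facts about Φ
  have one_le_prodR : ∀ (f : Fin n → ℝ), (∀ x, 1 ≤ f x) → (1:ℝ) ≤ ∏ x, f x := by
    intro f hf
    have := Finset.prod_le_prod (s := Finset.univ) (f := fun _ : Fin n => (1:ℝ)) (g := f)
      (fun x _ => zero_le_one) (fun x _ => hf x)
    simpa using this
  have hfact1 : ∀ kk : Fin n → ℕ, (1:ℝ) ≤ ∏ x, ((kk x).factorial : ℝ) := fun kk =>
    one_le_prodR _ fun x => Nat.one_le_cast.mpr (Nat.factorial_pos _)
  have hcat1 : ∀ L : ℕ, (1:ℝ) ≤ (catalan L : ℝ) := fun L => by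
    exact_mod_cast one_le_catalan L
  have hpcat1 : ∀ kk : Fin n → ℕ, (1:ℝ) ≤ ∏ x, (catalan (kk x) : ℝ) := fun kk =>
    one_le_prodR _ fun x => hcat1 _
  have hΦ1 : ∀ kk L, (1:ℝ) ≤ Φ kk L := by
    intro kk L
    simp only [hΦ]
    exact one_le_mul5 (hfact1 kk) (one_le_pow₀ hA1) (one_le_pow₀ hB1)
      (hpcat1 kk) (hcat1 L)
  have hΦ0 : ∀ kk L, (0:ℝ) ≤ Φ kk L := fun kk L => le_trans zero_le_one (hΦ1 kk L)
  have hbase' : ∀ kk : Fin n → ℕ, |τ kk []| ≤ Φ kk 0 := by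
    intro kk
    rw [hbase kk]
    split_ifs with h
    · simpa using hΦ1 kk 0
    · simpa using hΦ0 kk 0
  -- the core induction step
  have core : ∀ N : ℕ,
      (∀ kk P, (∑ x, kk x) + 1 ≤ N → |τ kk P| ≤ Φ kk P.length) →
      ∀ L (kk : Fin n → ℕ) (P : List (Fin m)), (∑ x, kk x) ≤ N → P.length ≤ L →
        |τ kk P| ≤ Φ kk P.length := by
    intro N hout L
    induction L with
    | zero =>
      intro kk P hk hP
      have : P = [] := List.eq_nil_of_length_eq_zero (Nat.le_zero.mp hP)
      subst this
      exact hbase' kk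
    | succ L ihL =>
      intro kk P hk hP
      match P with
      | [] => exact hbase' kk
      | i :: P' =>
        have hP' : P'.length ≤ L := by
          simp only [List.length_cons] at hP; omega
        show |τ kk (i :: P')| ≤ Φ kk (P'.length + 1)
        rw [hrec kk i P']
        have hS1 : |∑ pp ∈ Finset.Iic kk,
            (∏ j, ((kk j).choose (pp j) : ℝ)) *
              ∑ k ∈ occurrences i P',
                τ pp (P'.take (k : ℕ)) * τ (kk - pp) (P'.drop ((k : ℕ) + 1))|
            ≤ (1/2) * Φ kk (P'.length + 1) := by
          match P' with
          | [] =>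
            have hocc : (occurrences i ([] : List (Fin m))) = ∅ := by
              apply Finset.eq_empty_of_forall_notMem
              intro k
              exact absurd k.isLt (Nat.not_lt_zero _)
            simp only [hocc, Finset.sum_empty, mul_zero, Finset.sum_const_zero, abs_zero]
            linarith [hΦ0 kk (List.length ([]:List (Fin m)) + 1)]
          | a :: P'' =>
            -- ℓ := P''.length + 1 is the length of a :: P''
            have key : ∀ pp ∈ Finset.Iic kk,
                |(∏ j, ((kk j).choose (pp j) : ℝ)) *
                  ∑ k ∈ occurrences i (a :: P''),
                    τ pp ((a :: P'').take (k : ℕ)) * τ (kk - pp) ((a :: P'').drop ((k : ℕ) + 1))|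
                ≤ (∏ x, ((kk x).factorial : ℝ)) * A ^ (∑ x, kk x) * B ^ (P''.length) *
                    (∏ x, ((catalan (pp x) : ℝ) * (catalan ((kk - pp) x) : ℝ))) *
                    (catalan (P''.length + 1) : ℝ) := by
              intro pp hpp
              have hpple : pp ≤ kk := Finset.mem_Iic.mp hpp
              have hsp : (∑ x, pp x) ≤ N := le_trans (Finset.sum_le_sum fun x _ => hpple x) hk
              have hsq : (∑ x, (kk - pp) x) ≤ N := by
                refine le_trans (Finset.sum_le_sum fun x _ => ?_) hk
                simp only [Pi.sub_apply]; omega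
              rw [abs_mul]
              have hch : |∏ j, ((kk j).choose (pp j) : ℝ)| = ∏ j, ((kk j).choose (pp j) : ℝ) :=
                abs_of_nonneg (Finset.prod_nonneg fun j _ => Nat.cast_nonneg _)
              rw [hch]
              -- bound the inner sum
              have hinner : |∑ k ∈ occurrences i (a :: P''),
                  τ pp ((a :: P'').take (k : ℕ)) * τ (kk - pp) ((a :: P'').drop ((k : ℕ) + 1))|
                  ≤ ((∏ x, ((pp x).factorial : ℝ)) * (∏ x, (((kk - pp) x).factorial : ℝ))) *
                    A ^ (∑ x, kk x) * B ^ (P''.length) *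
                    ((∏ x, (catalan (pp x) : ℝ)) * (∏ x, (catalan ((kk - pp) x) : ℝ))) *
                    (catalan (P''.length + 1) : ℝ) := by
                calc |∑ k ∈ occurrences i (a :: P''),
                    τ pp ((a :: P'').take (k : ℕ)) * τ (kk - pp) ((a :: P'').drop ((k : ℕ) + 1))|
                    ≤ ∑ k ∈ occurrences i (a :: P''),
                      |τ pp ((a :: P'').take (k : ℕ)) * τ (kk - pp) ((a :: P'').drop ((k : ℕ) + 1))| :=
                      Finset.abs_sum_le_sum_abs _ _
                  _ ≤ ∑ k ∈ occurrences i (a :: P''),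
                      Φ pp (k : ℕ) * Φ (kk - pp) (P''.length - (k : ℕ)) := by
                      refine Finset.sum_le_sum fun k _ => ?_
                      rw [abs_mul]
                      have hk1 : (k : ℕ) < P''.length + 1 := k.isLt
                      have hP2 : P''.length + 1 ≤ L := by simpa using hP'
                      have hlen1 : ((a :: P'').take (k : ℕ)).length = (k : ℕ) := by
                        simp only [List.length_take, List.length_cons]; omega
                      have hlen2 : ((a :: P'').drop ((k : ℕ) + 1)).length
                          = P''.length - (k : ℕ) := by
                        simp only [List.length_drop, List.length_cons]; omega
                      have ht : |τ pp ((a :: P'').take (k : ℕ))| ≤ Φ pp (k : ℕ) := by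
                        have := ihL pp ((a :: P'').take (k : ℕ)) hsp (by rw [hlen1]; omega)
                        rwa [hlen1] at this
                      have hd : |τ (kk - pp) ((a :: P'').drop ((k : ℕ) + 1))|
                          ≤ Φ (kk - pp) (P''.length - (k : ℕ)) := by
                        have := ihL (kk - pp) ((a :: P'').drop ((k : ℕ) + 1)) hsq
                          (by rw [hlen2]; omega)
                        rwa [hlen2] at this
                      exact mul_le_mul ht hd (abs_nonneg _) (hΦ0 _ _)
                  _ = ∑ k ∈ occurrences i (a :: P''),
                      (((∏ x, ((pp x).factorial : ℝ)) * (∏ x, (((kk - pp) x).factorial : ℝ))) *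
                        A ^ (∑ x, kk x) * B ^ (P''.length) *
                        ((∏ x, (catalan (pp x) : ℝ)) * (∏ x, (catalan ((kk - pp) x) : ℝ)))) *
                        ((catalan (k:ℕ) : ℝ) * (catalan (P''.length - (k:ℕ)) : ℝ)) := by
                      refine Finset.sum_congr rfl fun k _ => ?_
                      have hk1 : (k : ℕ) < P''.length + 1 := k.isLt
                      have e1 : (∑ x, pp x) + (∑ x, (kk - pp) x) = ∑ x, kk x :=
                        sum_split pp kk hpple
                      have e2 : (k:ℕ) + (P''.length - (k:ℕ)) = P''.length := by omega
                      simp only [hΦ]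
                      rw [show A ^ (∑ x, kk x) = A ^ (∑ x, pp x) * A ^ (∑ x, (kk - pp) x) by
                          rw [← pow_add, e1],
                        show B ^ P''.length = B ^ (k:ℕ) * B ^ (P''.length - (k:ℕ)) by
                          rw [← pow_add, e2]]
                      ring
                  _ = (((∏ x, ((pp x).factorial : ℝ)) * (∏ x, (((kk - pp) x).factorial : ℝ))) *
                        A ^ (∑ x, kk x) * B ^ (P''.length) *
                        ((∏ x, (catalan (pp x) : ℝ)) * (∏ x, (catalan ((kk - pp) x) : ℝ)))) *
                        ∑ k ∈ occurrences i (a :: P''),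
                          ((catalan (k:ℕ) : ℝ) * (catalan (P''.length - (k:ℕ)) : ℝ)) :=
                      (Finset.mul_sum _ _ _).symm
                  _ ≤ (((∏ x, ((pp x).factorial : ℝ)) * (∏ x, (((kk - pp) x).factorial : ℝ))) *
                        A ^ (∑ x, kk x) * B ^ (P''.length) *
                        ((∏ x, (catalan (pp x) : ℝ)) * (∏ x, (catalan ((kk - pp) x) : ℝ)))) *
                        (catalan (P''.length + 1) : ℝ) := by
                      refine mul_le_mul_of_nonneg_left ?_ ?_
                      · have := occ_catalan_sum_le i a P''
                        calc ∑ k ∈ occurrences i (a :: P''),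
                            ((catalan (k:ℕ) : ℝ) * (catalan (P''.length - (k:ℕ)) : ℝ))
                            = ((∑ k ∈ occurrences i (a :: P''),
                                catalan (k:ℕ) * catalan (P''.length - (k:ℕ)) : ℕ) : ℝ) := by
                              push_cast; rfl
                          _ ≤ (catalan (P''.length + 1) : ℝ) := by exact_mod_cast this
                      · have h1 : (0:ℝ) ≤ ∏ x, ((pp x).factorial : ℝ) :=
                          Finset.prod_nonneg fun x _ => Nat.cast_nonneg _
                        have h2 : (0:ℝ) ≤ ∏ x, (((kk - pp) x).factorial : ℝ) :=
                          Finset.prod_nonneg fun x _ => Nat.cast_nonneg _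
                        have h3 : (0:ℝ) ≤ ∏ x, (catalan (pp x) : ℝ) :=
                          Finset.prod_nonneg fun x _ => Nat.cast_nonneg _
                        have h4 : (0:ℝ) ≤ ∏ x, (catalan ((kk - pp) x) : ℝ) :=
                          Finset.prod_nonneg fun x _ => Nat.cast_nonneg _
                        have h5 : (0:ℝ) ≤ A ^ (∑ x, kk x) := pow_nonneg hA0 _
                        have h6 : (0:ℝ) ≤ B ^ (P''.length) := pow_nonneg hB0 _
                        positivity
                  _ = ((∏ x, ((pp x).factorial : ℝ)) * (∏ x, (((kk - pp) x).factorial : ℝ))) *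
                        A ^ (∑ x, kk x) * B ^ (P''.length) *
                        ((∏ x, (catalan (pp x) : ℝ)) * (∏ x, (catalan ((kk - pp) x) : ℝ))) *
                        (catalan (P''.length + 1) : ℝ) := by ring
              calc (∏ j, ((kk j).choose (pp j) : ℝ)) *
                  |∑ k ∈ occurrences i (a :: P''),
                    τ pp ((a :: P'').take (k : ℕ)) * τ (kk - pp) ((a :: P'').drop ((k : ℕ) + 1))|
                  ≤ (∏ j, ((kk j).choose (pp j) : ℝ)) *
                    (((∏ x, ((pp x).factorial : ℝ)) * (∏ x, (((kk - pp) x).factorial : ℝ))) *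
                      A ^ (∑ x, kk x) * B ^ (P''.length) *
                      ((∏ x, (catalan (pp x) : ℝ)) * (∏ x, (catalan ((kk - pp) x) : ℝ))) *
                      (catalan (P''.length + 1) : ℝ)) :=
                    mul_le_mul_of_nonneg_left hinner
                      (Finset.prod_nonneg fun j _ => Nat.cast_nonneg _)
                _ = ((∏ j, ((kk j).choose (pp j) : ℝ)) *
                      ((∏ x, ((pp x).factorial : ℝ)) * (∏ x, (((kk - pp) x).factorial : ℝ)))) *
                      A ^ (∑ x, kk x) * B ^ (P''.length) *
                      ((∏ x, (catalan (pp x) : ℝ)) * (∏ x, (catalan ((kk - pp) x) : ℝ))) *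
                      (catalan (P''.length + 1) : ℝ) := by ring
                _ = (∏ x, ((kk x).factorial : ℝ)) * A ^ (∑ x, kk x) * B ^ (P''.length) *
                      (∏ x, ((catalan (pp x) : ℝ) * (catalan ((kk - pp) x) : ℝ))) *
                      (catalan (P''.length + 1) : ℝ) := by
                    rw [← Finset.prod_mul_distrib, ← Finset.prod_mul_distrib,
                      ← Finset.prod_mul_distrib]
                    congr 1
                    congr 3
                    refine Finset.prod_congr rfl fun x _ => ?_
                    have h := Nat.choose_mul_factorial_mul_factorial (hpple x)
                    have hxx : (kk x - pp x) = (kk - pp) x := by simp [Pi.sub_apply]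
                    rw [← hxx]
                    have h2 : (kk x).choose (pp x) * ((pp x).factorial *
                        (kk x - pp x).factorial) = (kk x).factorial := by rw [← h]; ring
                    exact_mod_cast h2
            -- now sum over pp
            calc |∑ pp ∈ Finset.Iic kk,
                (∏ j, ((kk j).choose (pp j) : ℝ)) *
                  ∑ k ∈ occurrences i (a :: P''),
                    τ pp ((a :: P'').take (k : ℕ)) * τ (kk - pp) ((a :: P'').drop ((k : ℕ) + 1))|
                ≤ ∑ pp ∈ Finset.Iic kk,
                  |(∏ j, ((kk j).choose (pp j) : ℝ)) *
                    ∑ k ∈ occurrences i (a :: P''),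
                      τ pp ((a :: P'').take (k : ℕ)) * τ (kk - pp) ((a :: P'').drop ((k : ℕ) + 1))| :=
                Finset.abs_sum_le_sum_abs _ _
              _ ≤ ∑ pp ∈ Finset.Iic kk,
                  (∏ x, ((kk x).factorial : ℝ)) * A ^ (∑ x, kk x) * B ^ (P''.length) *
                    (∏ x, ((catalan (pp x) : ℝ) * (catalan ((kk - pp) x) : ℝ))) *
                    (catalan (P''.length + 1) : ℝ) := Finset.sum_le_sum key
              _ = (∏ x, ((kk x).factorial : ℝ)) * A ^ (∑ x, kk x) * B ^ (P''.length) *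
                    (catalan (P''.length + 1) : ℝ) *
                    ∑ pp ∈ Finset.Iic kk,
                      (∏ x, ((catalan (pp x) : ℝ) * (catalan ((kk - pp) x) : ℝ))) := by
                  rw [Finset.mul_sum]
                  exact Finset.sum_congr rfl fun pp _ => by ring
              _ = (∏ x, ((kk x).factorial : ℝ)) * A ^ (∑ x, kk x) * B ^ (P''.length) *
                    (catalan (P''.length + 1) : ℝ) *
                    ((∏ x, catalan (kk x + 1) : ℕ) : ℝ) := by
                  congr 1
                  rw [← catalan_vandermonde kk]
                  push_cast
                  refine Finset.sum_congr rfl fun pp _ => Finset.prod_congr rfl fun x _ => by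
                    simp [Pi.sub_apply]
              _ ≤ (∏ x, ((kk x).factorial : ℝ)) * A ^ (∑ x, kk x) * B ^ (P''.length) *
                    (catalan (P''.length + 1) : ℝ) *
                    ((4:ℝ) ^ n * ∏ x, (catalan (kk x) : ℝ)) := by
                  refine mul_le_mul_of_nonneg_left ?_ ?_
                  · have hnat : (∏ x, catalan (kk x + 1)) ≤ ∏ x : Fin n, (4 * catalan (kk x)) :=
                      Finset.prod_le_prod' fun x _ => catalan_succ_le_four (kk x)
                    have : ((∏ x, catalan (kk x + 1) : ℕ) : ℝ)
                        ≤ ((∏ x : Fin n, (4 * catalan (kk x)) : ℕ) : ℝ) := by exact_mod_cast hnat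
                    calc ((∏ x, catalan (kk x + 1) : ℕ) : ℝ)
                        ≤ ((∏ x : Fin n, (4 * catalan (kk x)) : ℕ) : ℝ) := this
                      _ = (4:ℝ) ^ n * ∏ x, (catalan (kk x) : ℝ) := by
                          push_cast
                          rw [Finset.prod_mul_distrib]
                          simp [Finset.prod_const]
                  · have h5 : (0:ℝ) ≤ A ^ (∑ x, kk x) := pow_nonneg hA0 _
                    have h6 : (0:ℝ) ≤ B ^ (P''.length) := pow_nonneg hB0 _
                    have h1 : (0:ℝ) ≤ ∏ x, ((kk x).factorial : ℝ) :=
                      Finset.prod_nonneg fun x _ => Nat.cast_nonneg _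
                    positivity
              _ ≤ (1/2) * Φ kk ((a :: P'').length + 1) := by
                  simp only [hΦ, List.length_cons]
                  have hcat : (catalan (P''.length + 1) : ℝ) ≤ (catalan (P''.length + 1 + 1) : ℝ) := by
                    exact_mod_cast catalan_le_succ _
                  have hBpow : (4:ℝ) ^ n * B ^ P''.length * 2 ≤ B ^ (P''.length + 1 + 1) := by
                    have : B ^ (P''.length + 1 + 1) = B ^ P''.length * B ^ 2 := by
                      rw [← pow_add]
                    rw [this]
                    have hBn : (0:ℝ) ≤ B ^ P''.length := pow_nonneg hB0 _
                    nlinarith [hB2, pow_nonneg hB0 P''.length]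
                  have h1 : (0:ℝ) ≤ ∏ x, ((kk x).factorial : ℝ) :=
                    Finset.prod_nonneg fun x _ => Nat.cast_nonneg _
                  have h3 : (0:ℝ) ≤ ∏ x, (catalan (kk x) : ℝ) :=
                    Finset.prod_nonneg fun x _ => Nat.cast_nonneg _
                  have h5 : (0:ℝ) ≤ A ^ (∑ x, kk x) := pow_nonneg hA0 _
                  have hX0 : (0:ℝ) ≤ (∏ x, ((kk x).factorial : ℝ)) * A ^ (∑ x, kk x) *
                      (∏ x, (catalan (kk x) : ℝ)) := mul_nonneg (mul_nonneg h1 h5) h3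
                  have hc0 : (0:ℝ) ≤ (catalan (P''.length + 1) : ℝ) := Nat.cast_nonneg _
                  have hhalf : (4:ℝ) ^ n * B ^ P''.length ≤ (1/2) * B ^ (P''.length + 1 + 1) := by
                    linarith
                  calc (∏ x, ((kk x).factorial : ℝ)) * A ^ (∑ x, kk x) * B ^ P''.length *
                        (catalan (P''.length + 1) : ℝ) * ((4:ℝ) ^ n * ∏ x, (catalan (kk x) : ℝ))
                      = ((∏ x, ((kk x).factorial : ℝ)) * A ^ (∑ x, kk x) *
                          (∏ x, (catalan (kk x) : ℝ))) * ((4:ℝ) ^ n * B ^ P''.length) *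
                          (catalan (P''.length + 1) : ℝ) := by ring
                    _ ≤ ((∏ x, ((kk x).factorial : ℝ)) * A ^ (∑ x, kk x) *
                          (∏ x, (catalan (kk x) : ℝ))) * ((1/2) * B ^ (P''.length + 1 + 1)) *
                          (catalan (P''.length + 1) : ℝ) :=
                        mul_le_mul_of_nonneg_right
                          (mul_le_mul_of_nonneg_left hhalf hX0) hc0
                    _ ≤ ((∏ x, ((kk x).factorial : ℝ)) * A ^ (∑ x, kk x) *
                          (∏ x, (catalan (kk x) : ℝ))) * ((1/2) * B ^ (P''.length + 1 + 1)) *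
                          (catalan (P''.length + 1 + 1) : ℝ) := by
                        refine mul_le_mul_of_nonneg_left hcat ?_
                        have : (0:ℝ) ≤ B ^ (P''.length + 1 + 1) := pow_nonneg hB0 _
                        nlinarith
                    _ = 1/2 * ((((∏ x, ((kk x).factorial : ℝ)) * A ^ (∑ x, kk x)) *
                          B ^ (P''.length + 1 + 1) * (∏ x, (catalan (kk x) : ℝ))) *
                          (catalan (P''.length + 1 + 1) : ℝ)) := by ring
        have hS2 : |∑ j : Fin n,
            (kk j : ℝ) *
              ((∑ k ∈ occurrences i (q j), τ (kk - unitIdx j) (cycTerm (q j) (k : ℕ) P'))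
               + ∑ k ∈ occurrences i (q j).reverse,
                   τ (kk - unitIdx j) (cycTerm (q j).reverse (k : ℕ) P'))|
            ≤ (1/2) * Φ kk (P'.length + 1) := by
          rcases Nat.eq_zero_or_pos (∑ x, kk x) with hS | hS
          · have hz : ∀ j, kk j = 0 := fun j =>
              (Finset.sum_eq_zero_iff.mp hS) j (Finset.mem_univ j)
            have hzero : (∑ j : Fin n,
                (kk j : ℝ) *
                  ((∑ k ∈ occurrences i (q j), τ (kk - unitIdx j) (cycTerm (q j) (k : ℕ) P'))
                   + ∑ k ∈ occurrences i (q j).reverse,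
                       τ (kk - unitIdx j) (cycTerm (q j).reverse (k : ℕ) P'))) = 0 :=
              Finset.sum_eq_zero fun j _ => by rw [hz j]; simp
            rw [hzero, abs_zero]
            linarith [hΦ0 kk (P'.length + 1)]
          · -- basic nonnegativity facts
            have hPf0 : (0:ℝ) ≤ ∏ x, ((kk x).factorial : ℝ) :=
              Finset.prod_nonneg fun x _ => Nat.cast_nonneg _
            have hPC0 : (0:ℝ) ≤ ∏ x, (catalan (kk x) : ℝ) :=
              Finset.prod_nonneg fun x _ => Nat.cast_nonneg _
            have hA10 : (0:ℝ) ≤ A ^ ((∑ x, kk x) - 1) := pow_nonneg hA0 _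
            have hU0 : (0:ℝ) ≤ (2 * (D:ℝ) * 4 ^ D * B ^ D) *
                ((∏ x, ((kk x).factorial : ℝ)) * A ^ ((∑ x, kk x) - 1) * B ^ (P'.length + 1) *
                  (∏ x, (catalan (kk x) : ℝ)) * (catalan (P'.length + 1) : ℝ)) :=
              mul_nonneg hcst0 (mul_nonneg (mul_nonneg (mul_nonneg
                (mul_nonneg hPf0 hA10) (pow_nonneg hB0 _)) hPC0) (Nat.cast_nonneg _))
            have hjb : ∀ j : Fin n,
                |(kk j : ℝ) *
                  ((∑ k ∈ occurrences i (q j), τ (kk - unitIdx j) (cycTerm (q j) (k : ℕ) P'))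
                   + ∑ k ∈ occurrences i (q j).reverse,
                       τ (kk - unitIdx j) (cycTerm (q j).reverse (k : ℕ) P'))|
                ≤ (2 * (D:ℝ) * 4 ^ D * B ^ D) *
                  ((∏ x, ((kk x).factorial : ℝ)) * A ^ ((∑ x, kk x) - 1) * B ^ (P'.length + 1) *
                    (∏ x, (catalan (kk x) : ℝ)) * (catalan (P'.length + 1) : ℝ)) := by
              intro j
              rcases Nat.eq_zero_or_pos (kk j) with h0 | h1
              · rw [h0]
                simpa using hU0
              · have hsub := sum_sub_unitIdx kk j h1
                have hf'0 : (0:ℝ) ≤ ∏ x, (((kk - unitIdx j) x).factorial : ℝ) :=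
                  Finset.prod_nonneg fun x _ => Nat.cast_nonneg _
                have hc'0 : (0:ℝ) ≤ ∏ x, (catalan ((kk - unitIdx j) x) : ℝ) :=
                  Finset.prod_nonneg fun x _ => Nat.cast_nonneg _
                have hV0 : (0:ℝ) ≤ (∏ x, (((kk - unitIdx j) x).factorial : ℝ)) *
                    A ^ ((∑ x, kk x) - 1) * B ^ (D + P'.length) *
                    (∏ x, (catalan ((kk - unitIdx j) x) : ℝ)) *
                    (catalan (D + P'.length) : ℝ) :=
                  mul_nonneg (mul_nonneg (mul_nonneg (mul_nonneg hf'0 hA10)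
                    (pow_nonneg hB0 _)) hc'0) (Nat.cast_nonneg _)
                have hout' : ∀ W : List (Fin m), W.length ≤ D + P'.length →
                    |τ (kk - unitIdx j) W| ≤ (∏ x, (((kk - unitIdx j) x).factorial : ℝ)) *
                      A ^ ((∑ x, kk x) - 1) * B ^ (D + P'.length) *
                      (∏ x, (catalan ((kk - unitIdx j) x) : ℝ)) *
                      (catalan (D + P'.length) : ℝ) := by
                  intro W hW
                  have h := hout (kk - unitIdx j) W (by omega)
                  have hS' : (∑ x, (kk - unitIdx j) x) = (∑ x, kk x) - 1 := by omega
                  refine le_trans h ?_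
                  simp only [hΦ, hS']
                  have hb : B ^ W.length ≤ B ^ (D + P'.length) := pow_le_pow_right₀ hB1 hW
                  have hc : (catalan W.length : ℝ) ≤ (catalan (D + P'.length) : ℝ) := by
                    exact_mod_cast catalan_mono hW
                  have s1 : (∏ x, (((kk - unitIdx j) x).factorial : ℝ)) *
                      A ^ ((∑ x, kk x) - 1) * B ^ W.length
                      ≤ (∏ x, (((kk - unitIdx j) x).factorial : ℝ)) *
                        A ^ ((∑ x, kk x) - 1) * B ^ (D + P'.length) :=
                    mul_le_mul_of_nonneg_left hb (mul_nonneg hf'0 hA10)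
                  have s2 := mul_le_mul_of_nonneg_right s1 hc'0
                  exact mul_le_mul s2 hc (Nat.cast_nonneg _)
                    (mul_nonneg (mul_nonneg (mul_nonneg hf'0 hA10) (pow_nonneg hB0 _)) hc'0)
                have hcard1 : ((occurrences i (q j)).card : ℝ) ≤ (D:ℝ) := by
                  have hle : (occurrences i (q j)).card ≤ (q j).length := by
                    simpa using Finset.card_le_univ (occurrences i (q j))
                  exact_mod_cast le_trans hle (hq j)
                have hcard2 : ((occurrences i (q j).reverse).card : ℝ) ≤ (D:ℝ) := by
                  have hle : (occurrences i (q j).reverse).card ≤ (q j).reverse.length := by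
                    simpa using Finset.card_le_univ (occurrences i (q j).reverse)
                  have : (q j).reverse.length ≤ D := by
                    rw [List.length_reverse]; exact hq j
                  exact_mod_cast le_trans hle this
                have hT1 : |∑ k ∈ occurrences i (q j),
                    τ (kk - unitIdx j) (cycTerm (q j) (k : ℕ) P')|
                    ≤ (D:ℝ) * ((∏ x, (((kk - unitIdx j) x).factorial : ℝ)) *
                      A ^ ((∑ x, kk x) - 1) * B ^ (D + P'.length) *
                      (∏ x, (catalan ((kk - unitIdx j) x) : ℝ)) *
                      (catalan (D + P'.length) : ℝ)) := by
                  refine le_trans (Finset.abs_sum_le_sum_abs _ _) ?_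
                  refine le_trans (Finset.sum_le_sum (fun k _ => hout' _ ?_)) ?_
                  · have hkq : (k : ℕ) < (q j).length := k.isLt
                    have hD := hq j
                    simp only [cycTerm, List.length_append, List.length_drop,
                      List.length_take]
                    omega
                  · rw [Finset.sum_const, nsmul_eq_mul]
                    exact mul_le_mul_of_nonneg_right hcard1 hV0
                have hT2 : |∑ k ∈ occurrences i (q j).reverse,
                    τ (kk - unitIdx j) (cycTerm (q j).reverse (k : ℕ) P')|
                    ≤ (D:ℝ) * ((∏ x, (((kk - unitIdx j) x).factorial : ℝ)) *
                      A ^ ((∑ x, kk x) - 1) * B ^ (D + P'.length) *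
                      (∏ x, (catalan ((kk - unitIdx j) x) : ℝ)) *
                      (catalan (D + P'.length) : ℝ)) := by
                  refine le_trans (Finset.abs_sum_le_sum_abs _ _) ?_
                  refine le_trans (Finset.sum_le_sum (fun k _ => hout' _ ?_)) ?_
                  · have hkq : (k : ℕ) < (q j).reverse.length := k.isLt
                    have hD := hq j
                    simp only [cycTerm, List.length_append, List.length_drop,
                      List.length_take, List.length_reverse] at hkq ⊢
                    omega
                  · rw [Finset.sum_const, nsmul_eq_mul]
                    exact mul_le_mul_of_nonneg_right hcard2 hV0
                -- combine
                rw [abs_mul, Nat.abs_cast]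
                have habs2 : |(∑ k ∈ occurrences i (q j),
                    τ (kk - unitIdx j) (cycTerm (q j) (k : ℕ) P'))
                    + ∑ k ∈ occurrences i (q j).reverse,
                        τ (kk - unitIdx j) (cycTerm (q j).reverse (k : ℕ) P')|
                    ≤ 2 * (D:ℝ) * ((∏ x, (((kk - unitIdx j) x).factorial : ℝ)) *
                      A ^ ((∑ x, kk x) - 1) * B ^ (D + P'.length) *
                      (∏ x, (catalan ((kk - unitIdx j) x) : ℝ)) *
                      (catalan (D + P'.length) : ℝ)) := by
                  refine le_trans (abs_add_le _ _) ?_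
                  linarith
                have step1 : (kk j : ℝ) *
                    |(∑ k ∈ occurrences i (q j),
                      τ (kk - unitIdx j) (cycTerm (q j) (k : ℕ) P'))
                      + ∑ k ∈ occurrences i (q j).reverse,
                          τ (kk - unitIdx j) (cycTerm (q j).reverse (k : ℕ) P')|
                    ≤ (kk j : ℝ) * (2 * (D:ℝ) * ((∏ x, (((kk - unitIdx j) x).factorial : ℝ)) *
                      A ^ ((∑ x, kk x) - 1) * B ^ (D + P'.length) *
                      (∏ x, (catalan ((kk - unitIdx j) x) : ℝ)) *
                      (catalan (D + P'.length) : ℝ))) :=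
                  mul_le_mul_of_nonneg_left habs2 (Nat.cast_nonneg _)
                refine le_trans step1 ?_
                -- now the constant manipulation
                have m1 : B ^ (D + P'.length) ≤ B ^ D * B ^ (P'.length + 1) := by
                  rw [pow_add]
                  exact mul_le_mul_of_nonneg_left
                    (pow_le_pow_right₀ hB1 (Nat.le_succ _)) (pow_nonneg hB0 D)
                have m2 : (∏ x, (catalan ((kk - unitIdx j) x) : ℝ))
                    ≤ ∏ x, (catalan (kk x) : ℝ) :=
                  Finset.prod_le_prod (fun x _ => Nat.cast_nonneg _) (fun x _ => by
                    exact_mod_cast catalan_mono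
                      (show (kk - unitIdx j) x ≤ kk x by
                        simp only [Pi.sub_apply]; exact Nat.sub_le _ _))
                have m3 : (catalan (D + P'.length) : ℝ)
                    ≤ (4:ℝ) ^ D * (catalan (P'.length + 1) : ℝ) := by
                  have h := le_trans (catalan_add_le D P'.length)
                    (Nat.mul_le_mul_left (4 ^ D) (catalan_le_succ P'.length))
                  exact_mod_cast h
                have hC0 : (0:ℝ) ≤ 2 * (D:ℝ) * ((kk j : ℝ) *
                    (∏ x, (((kk - unitIdx j) x).factorial : ℝ))) * A ^ ((∑ x, kk x) - 1) := by
                  have : (0:ℝ) ≤ (kk j : ℝ) * ∏ x, (((kk - unitIdx j) x).factorial : ℝ) :=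
                    mul_nonneg (Nat.cast_nonneg _) hf'0
                  have h2D : (0:ℝ) ≤ 2 * (D:ℝ) := by positivity
                  exact mul_nonneg (mul_nonneg h2D this) hA10
                calc (kk j : ℝ) * (2 * (D:ℝ) * ((∏ x, (((kk - unitIdx j) x).factorial : ℝ)) *
                      A ^ ((∑ x, kk x) - 1) * B ^ (D + P'.length) *
                      (∏ x, (catalan ((kk - unitIdx j) x) : ℝ)) *
                      (catalan (D + P'.length) : ℝ)))
                    = 2 * (D:ℝ) * ((kk j : ℝ) *
                        (∏ x, (((kk - unitIdx j) x).factorial : ℝ))) *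
                        A ^ ((∑ x, kk x) - 1) * B ^ (D + P'.length) *
                        (∏ x, (catalan ((kk - unitIdx j) x) : ℝ)) *
                        (catalan (D + P'.length) : ℝ) := by ring
                  _ ≤ 2 * (D:ℝ) * ((kk j : ℝ) *
                        (∏ x, (((kk - unitIdx j) x).factorial : ℝ))) *
                        A ^ ((∑ x, kk x) - 1) * (B ^ D * B ^ (P'.length + 1)) *
                        (∏ x, (catalan (kk x) : ℝ)) *
                        ((4:ℝ) ^ D * (catalan (P'.length + 1) : ℝ)) := by
                      have n1 := mul_le_mul_of_nonneg_left m1 hC0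
                      have n2 := mul_le_mul m2 m3 (Nat.cast_nonneg _) hPC0
                      have l0 : (0:ℝ) ≤ 2 * (D:ℝ) * ((kk j : ℝ) *
                          (∏ x, (((kk - unitIdx j) x).factorial : ℝ))) *
                          A ^ ((∑ x, kk x) - 1) * (B ^ D * B ^ (P'.length + 1)) :=
                        mul_nonneg hC0 (mul_nonneg (pow_nonneg hB0 _) (pow_nonneg hB0 _))
                      calc 2 * (D:ℝ) * ((kk j : ℝ) *
                            (∏ x, (((kk - unitIdx j) x).factorial : ℝ))) *
                            A ^ ((∑ x, kk x) - 1) * B ^ (D + P'.length) *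
                            (∏ x, (catalan ((kk - unitIdx j) x) : ℝ)) *
                            (catalan (D + P'.length) : ℝ)
                          = (2 * (D:ℝ) * ((kk j : ℝ) *
                            (∏ x, (((kk - unitIdx j) x).factorial : ℝ))) *
                            A ^ ((∑ x, kk x) - 1) * B ^ (D + P'.length)) *
                            ((∏ x, (catalan ((kk - unitIdx j) x) : ℝ)) *
                            (catalan (D + P'.length) : ℝ)) := by ring
                        _ ≤ (2 * (D:ℝ) * ((kk j : ℝ) *
                            (∏ x, (((kk - unitIdx j) x).factorial : ℝ))) *
                            A ^ ((∑ x, kk x) - 1) * (B ^ D * B ^ (P'.length + 1))) *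
                            ((∏ x, (catalan (kk x) : ℝ)) *
                            ((4:ℝ) ^ D * (catalan (P'.length + 1) : ℝ))) := by
                            refine mul_le_mul n1 n2 ?_ l0
                            exact mul_nonneg hc'0 (Nat.cast_nonneg _)
                        _ = 2 * (D:ℝ) * ((kk j : ℝ) *
                            (∏ x, (((kk - unitIdx j) x).factorial : ℝ))) *
                            A ^ ((∑ x, kk x) - 1) * (B ^ D * B ^ (P'.length + 1)) *
                            (∏ x, (catalan (kk x) : ℝ)) *
                            ((4:ℝ) ^ D * (catalan (P'.length + 1) : ℝ)) := by ring
                  _ = (2 * (D:ℝ) * 4 ^ D * B ^ D) *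
                        ((∏ x, ((kk x).factorial : ℝ)) * A ^ ((∑ x, kk x) - 1) *
                          B ^ (P'.length + 1) * (∏ x, (catalan (kk x) : ℝ)) *
                          (catalan (P'.length + 1) : ℝ)) := by
                      rw [fact_prod_unitIdx kk j h1]
                      ring
            -- sum over j
            have hApow : A ^ (∑ x, kk x) = A ^ ((∑ x, kk x) - 1) * A := by
              rw [← pow_succ]
              congr 1
              omega
            calc |∑ j : Fin n,
                (kk j : ℝ) *
                  ((∑ k ∈ occurrences i (q j), τ (kk - unitIdx j) (cycTerm (q j) (k : ℕ) P'))
                   + ∑ k ∈ occurrences i (q j).reverse,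
                       τ (kk - unitIdx j) (cycTerm (q j).reverse (k : ℕ) P'))|
                ≤ ∑ j : Fin n, |(kk j : ℝ) *
                  ((∑ k ∈ occurrences i (q j), τ (kk - unitIdx j) (cycTerm (q j) (k : ℕ) P'))
                   + ∑ k ∈ occurrences i (q j).reverse,
                       τ (kk - unitIdx j) (cycTerm (q j).reverse (k : ℕ) P'))| :=
                Finset.abs_sum_le_sum_abs _ _
              _ ≤ ∑ _j : Fin n, (2 * (D:ℝ) * 4 ^ D * B ^ D) *
                    ((∏ x, ((kk x).factorial : ℝ)) * A ^ ((∑ x, kk x) - 1) *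
                      B ^ (P'.length + 1) * (∏ x, (catalan (kk x) : ℝ)) *
                      (catalan (P'.length + 1) : ℝ)) := Finset.sum_le_sum fun j _ => hjb j
              _ = (n:ℝ) * ((2 * (D:ℝ) * 4 ^ D * B ^ D) *
                    ((∏ x, ((kk x).factorial : ℝ)) * A ^ ((∑ x, kk x) - 1) *
                      B ^ (P'.length + 1) * (∏ x, (catalan (kk x) : ℝ)) *
                      (catalan (P'.length + 1) : ℝ))) := by
                  rw [Finset.sum_const, nsmul_eq_mul, Finset.card_univ, Fintype.card_fin]
              _ ≤ (1/2) * Φ kk (P'.length + 1) := by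
                  simp only [hΦ, hApow]
                  have hrest0 : (0:ℝ) ≤ (∏ x, ((kk x).factorial : ℝ)) *
                      A ^ ((∑ x, kk x) - 1) * B ^ (P'.length + 1) *
                      (∏ x, (catalan (kk x) : ℝ)) * (catalan (P'.length + 1) : ℝ) :=
                    mul_nonneg (mul_nonneg (mul_nonneg (mul_nonneg hPf0 hA10)
                      (pow_nonneg hB0 _)) hPC0) (Nat.cast_nonneg _)
                  nlinarith [mul_le_mul_of_nonneg_right hAge hrest0]
        refine le_trans (abs_add_le _ _) ?_
        linarith
  have key : ∀ (N : ℕ) (kk : Fin n → ℕ) (P : List (Fin m)),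
      (∑ x, kk x) ≤ N → |τ kk P| ≤ Φ kk P.length := by
    intro N
    induction N with
    | zero =>
      intro kk P h
      exact core 0 (fun kk' P' h' => absurd h' (by omega)) P.length kk P h le_rfl
    | succ N ih =>
      intro kk P h
      exact core (N+1) (fun kk' P' h' => ih kk' P' (by omega)) P.length kk P h le_rfl
  intro kk P
  have h := key (∑ x, kk x) kk P le_rfl
  have hposf : (0:ℝ) < ∏ x, ((kk x).factorial : ℝ) :=
    lt_of_lt_of_le zero_lt_one (hfact1 kk)
  rw [div_le_iff₀ hposf]
  calc |τ kk P| ≤ Φ kk P.length := h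
    _ = A ^ (∑ x, kk x) * B ^ P.length * (∏ x, (catalan (kk x) : ℝ)) *
        (catalan P.length : ℝ) * ∏ x, ((kk x).factorial : ℝ) := by
        simp only [hΦ]
        ring
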